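/- If A and B are symmetric real-valued multilinear maps of ranks r and s respectively on a vector space E, and the symmetrization of A ⊗ B is zero, then A = 0 or B = 0. -/

import Mathlib

open scoped BigOperators

open Finset in
private lemma superset_alt_sum {n : ℕ} (T : Finset (Fin n)) :
    ∑ S ∈ Finset.univ.filter (fun S : Finset (Fin n) => T ⊆ S), (-1 : ℝ) ^ S.card
      = if T = Finset.univ then (-1 : ℝ) ^ n else 0 := by
  have hbij : ∑ S ∈ Finset.univ.filter (fun S : Finset (Fin n) => T ⊆ S), (-1 : ℝ) ^ S.card
      = ∑ U ∈ Tᶜ.powerset, (-1 : ℝ) ^ (U.card + T.card) := by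
    refine Finset.sum_nbij' (fun S => S \ T) (fun U => U ∪ T) ?_ ?_ ?_ ?_ ?_
    · intro S hS
      simp only [Finset.mem_powerset]
      intro x hx
      simp only [Finset.mem_sdiff] at hx
      simp [hx.2]
    · intro U hU
      simp only [Finset.mem_filter, Finset.mem_univ, true_and]
      exact Finset.subset_union_right
    · intro S hS
      simp only [Finset.mem_filter] at hS
      exact Finset.sdiff_union_of_subset hS.2
    · intro U hU
      simp only [Finset.mem_powerset] at hU
      show (U ∪ T) \ T = U
      rw [Finset.union_sdiff_right]
      refine Finset.sdiff_eq_self_of_disjoint (Finset.disjoint_left.2 fun a ha hT => ?_)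
      have := hU ha
      simp only [Finset.mem_compl] at this
      exact this hT
    · intro S hS
      simp only [Finset.mem_filter] at hS
      show ((-1 : ℝ)) ^ S.card = (-1 : ℝ) ^ ((S \ T).card + T.card)
      rw [Finset.card_sdiff_add_card_eq_card hS.2]
  rw [hbij]
  have hzR : ∑ U ∈ Tᶜ.powerset, (-1 : ℝ) ^ U.card
      = if Tᶜ = ∅ then 1 else 0 := by
    have hz := Finset.sum_powerset_neg_one_pow_card (x := Tᶜ)
    have := congrArg (Int.cast : ℤ → ℝ) hz
    push_cast at this
    convert this using 2
  have hsplit : ∑ U ∈ Tᶜ.powerset, (-1 : ℝ) ^ (U.card + T.card)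
      = (∑ U ∈ Tᶜ.powerset, (-1 : ℝ) ^ U.card) * (-1 : ℝ) ^ T.card := by
    rw [Finset.sum_mul]
    exact Finset.sum_congr rfl fun U _ => (pow_add _ _ _)
  rw [hsplit, hzR]
  by_cases hT : T = Finset.univ
  · simp [hT, Finset.card_univ]
  · have hne : Tᶜ ≠ ∅ := by
      intro h
      exact hT (by simpa using congrArg compl h)
    simp [hT, hne]

private lemma image_univ_eq_univ_iff {n : ℕ} (φ : Fin n → Fin n) :
    Finset.univ.image φ = Finset.univ ↔ Function.Surjective φ := by
  constructor
  · intro h x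
    have hx : x ∈ Finset.univ.image φ := by rw [h]; exact Finset.mem_univ x
    obtain ⟨y, _, hy⟩ := Finset.mem_image.1 hx
    exact ⟨y, hy⟩
  · intro h
    ext x
    simp only [Finset.mem_image, Finset.mem_univ, true_and, iff_true]
    exact h x

private lemma polarization {E : Type*} [AddCommGroup E] [Module ℝ E] {n : ℕ}
    (f : MultilinearMap ℝ (fun _ : Fin n => E) ℝ)
    (hsym : ∀ (v : Fin n → E) (σ : Equiv.Perm (Fin n)), f (v ∘ σ) = f v)
    (hdiag : ∀ x : E, f (fun _ => x) = 0) : f = 0 := by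
  ext v
  have key : ∑ S : Finset (Fin n), (-1 : ℝ) ^ S.card * f (fun _ => ∑ i ∈ S, v i) = 0 := by
    simp [hdiag]
  have expand : ∀ S : Finset (Fin n),
      f (fun _ => ∑ i ∈ S, v i)
        = ∑ φ ∈ Fintype.piFinset (fun _ : Fin n => S), f (fun i => v (φ i)) :=
    fun S => f.map_sum_finset (fun _ j => v j) (fun _ => S)
  have hpi : ∀ S : Finset (Fin n),
      Fintype.piFinset (fun _ : Fin n => S)
        = Finset.univ.filter (fun φ : Fin n → Fin n => ∀ i, φ i ∈ S) := by
    intro S; ext φ; simp [Fintype.mem_piFinset]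
  have swap : ∑ S : Finset (Fin n), (-1 : ℝ) ^ S.card * f (fun _ => ∑ i ∈ S, v i)
      = ∑ φ ∈ Finset.univ.filter
          (fun φ : Fin n → Fin n => Finset.univ.image φ = Finset.univ),
          (-1 : ℝ) ^ n * f (fun i => v (φ i)) := by
    calc ∑ S : Finset (Fin n), (-1 : ℝ) ^ S.card * f (fun _ => ∑ i ∈ S, v i)
        = ∑ S : Finset (Fin n), ∑ φ : Fin n → Fin n,
            (if ∀ i, φ i ∈ S then (-1 : ℝ) ^ S.card * f (fun i => v (φ i)) else 0) := by
          refine Finset.sum_congr rfl fun S _ => ?_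
          rw [expand S, Finset.mul_sum, hpi S, Finset.sum_filter]
      _ = ∑ φ : Fin n → Fin n, ∑ S : Finset (Fin n),
            (if ∀ i, φ i ∈ S then (-1 : ℝ) ^ S.card * f (fun i => v (φ i)) else 0) :=
          Finset.sum_comm
      _ = ∑ φ : Fin n → Fin n,
            (∑ S ∈ Finset.univ.filter (fun S : Finset (Fin n) => Finset.univ.image φ ⊆ S),
              (-1 : ℝ) ^ S.card) * f (fun i => v (φ i)) := by
          refine Finset.sum_congr rfl fun φ _ => ?_
          rw [Finset.sum_filter, Finset.sum_mul]
          refine Finset.sum_congr rfl fun S _ => ?_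
          by_cases h : ∀ i, φ i ∈ S
          · rw [if_pos h, if_pos (Finset.image_subset_iff.2 fun x _ => h x)]
          · rw [if_neg h, if_neg (fun hh => h fun i =>
              Finset.image_subset_iff.1 hh i (Finset.mem_univ i)), zero_mul]
      _ = ∑ φ : Fin n → Fin n,
            (if Finset.univ.image φ = Finset.univ then (-1 : ℝ) ^ n else 0)
              * f (fun i => v (φ i)) := by
          refine Finset.sum_congr rfl fun φ _ => ?_
          rw [superset_alt_sum]
      _ = ∑ φ ∈ Finset.univ.filter
            (fun φ : Fin n → Fin n => Finset.univ.image φ = Finset.univ),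
            (-1 : ℝ) ^ n * f (fun i => v (φ i)) := by
          rw [Finset.sum_filter]
          refine Finset.sum_congr rfl fun φ _ => ?_
          by_cases h : Finset.univ.image φ = Finset.univ
          · rw [if_pos h, if_pos h]
          · rw [if_neg h, if_neg h, zero_mul]
  rw [swap] at key
  have hconst : ∀ φ ∈ Finset.univ.filter
      (fun φ : Fin n → Fin n => Finset.univ.image φ = Finset.univ),
      (-1 : ℝ) ^ n * f (fun i => v (φ i)) = (-1 : ℝ) ^ n * f v := by
    intro φ hφ
    simp only [Finset.mem_filter, Finset.mem_univ, true_and] at hφ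
    have hsurj : Function.Surjective φ := (image_univ_eq_univ_iff φ).1 hφ
    have hbij : Function.Bijective φ := Finite.surjective_iff_bijective.1 hsurj
    have : f (v ∘ (Equiv.ofBijective φ hbij)) = f v := hsym v _
    simpa [Function.comp_def] using this
  rw [Finset.sum_congr rfl hconst, Finset.sum_const, nsmul_eq_mul] at key
  have hmem : (id : Fin n → Fin n) ∈ Finset.univ.filter
      (fun φ : Fin n → Fin n => Finset.univ.image φ = Finset.univ) := by
    simp [Finset.image_id]
  have hcard : ((Finset.univ.filter
      (fun φ : Fin n → Fin n => Finset.univ.image φ = Finset.univ)).card : ℝ) ≠ 0 := by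
    rw [Nat.cast_ne_zero, ← Nat.pos_iff_ne_zero, Finset.card_pos]
    exact ⟨id, hmem⟩
  have hneg : ((-1 : ℝ) ^ n) ≠ 0 := by positivity
  rcases mul_eq_zero.1 key with h | h
  · exact absurd h hcard
  · rcases mul_eq_zero.1 h with h' | h'
    · exact absurd h' hneg
    · simpa using h'

open Polynomial in
private lemma diag_poly {E : Type*} [AddCommGroup E] [Module ℝ E] {n : ℕ}
    (f : MultilinearMap ℝ (fun _ : Fin n => E) ℝ) (x₀ y : E) :
    ∃ P : ℝ[X], (∀ t : ℝ, P.eval t = f (fun _ => t • x₀ + y)) ∧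
      P.coeff n = f (fun _ => x₀) := by
  classical
  refine ⟨∑ S : Finset (Fin n),
      C (f (S.piecewise (fun _ => x₀) (fun _ => y))) * X ^ S.card, ?_, ?_⟩
  · intro t
    have h1 : (fun _ : Fin n => t • x₀ + y)
        = (fun _ : Fin n => t • x₀) + fun _ : Fin n => y := rfl
    rw [h1, f.map_add_univ, eval_finset_sum]
    refine Finset.sum_congr rfl fun S _ => ?_
    have hpw : S.piecewise (fun _ : Fin n => t • x₀) (fun _ => y)
        = S.piecewise (fun i => t • (S.piecewise (fun _ : Fin n => x₀) (fun _ => y)) i)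
            (S.piecewise (fun _ : Fin n => x₀) (fun _ => y)) := by
      ext i
      by_cases h : i ∈ S
      · rw [Finset.piecewise_eq_of_mem _ _ _ h, Finset.piecewise_eq_of_mem _ _ _ h,
          Finset.piecewise_eq_of_mem _ _ _ h]
      · rw [Finset.piecewise_eq_of_notMem _ _ _ h, Finset.piecewise_eq_of_notMem _ _ _ h,
          Finset.piecewise_eq_of_notMem _ _ _ h]
    rw [hpw, f.map_piecewise_smul, Polynomial.eval_mul, Polynomial.eval_C,
      Polynomial.eval_pow, Polynomial.eval_X, Finset.prod_const, smul_eq_mul, mul_comm]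
  · rw [finset_sum_coeff]
    have hterm : ∀ S : Finset (Fin n),
        (C (f (S.piecewise (fun _ => x₀) (fun _ => y))) * X ^ S.card).coeff n
          = if S = Finset.univ then f (fun _ : Fin n => x₀) else 0 := by
      intro S
      rw [coeff_C_mul, coeff_X_pow]
      by_cases h : S = Finset.univ
      · subst h
        simp [Finset.card_univ, Finset.piecewise_univ]
      · have hc : S.card ≠ n := by
          intro hc
          exact h (S.card_eq_iff_eq_univ.1 (by simpa using hc))
        rw [if_neg (fun hh : n = S.card => hc hh.symm), mul_zero, if_neg h]
    rw [Finset.sum_congr rfl fun S _ => hterm S]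
    simp

theorem sym_tensor_product_eq_zero
    {E : Type*} [AddCommGroup E] [Module ℝ E]
    {r s : ℕ}
    (A : MultilinearMap ℝ (fun _ : Fin r => E) ℝ)
    (B : MultilinearMap ℝ (fun _ : Fin s => E) ℝ)
    (hAsym : ∀ (v : Fin r → E) (σ : Equiv.Perm (Fin r)), A (v ∘ σ) = A v)
    (hBsym : ∀ (v : Fin s → E) (σ : Equiv.Perm (Fin s)), B (v ∘ σ) = B v)
    (hSym0 : ∀ v : Fin (r + s) → E,
      (((r + s).factorial : ℝ))⁻¹ *
        ∑ σ : Equiv.Perm (Fin (r + s)),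
          A (fun i => v (σ (Fin.castAdd s i))) * B (fun j => v (σ (Fin.natAdd r j))) = 0) :
    A = 0 ∨ B = 0 := by
  classical
  have hdiag : ∀ x : E, A (fun _ => x) * B (fun _ => x) = 0 := by
    intro x
    have h := hSym0 (fun _ => x)
    simp only [Finset.sum_const, Finset.card_univ, nsmul_eq_mul] at h
    have hfac : ((r + s).factorial : ℝ) ≠ 0 :=
      Nat.cast_ne_zero.2 (Nat.factorial_ne_zero _)
    have hcard : (Fintype.card (Equiv.Perm (Fin (r + s))) : ℝ) ≠ 0 := by
      simp [Fintype.card_perm, Nat.factorial_ne_zero]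
    rcases mul_eq_zero.1 h with h' | h'
    · exact absurd (inv_eq_zero.1 h') hfac
    · rcases mul_eq_zero.1 h' with h'' | h''
      · exact absurd h'' hcard
      · exact h''
  by_cases hA : A = 0
  · exact Or.inl hA
  · right
    have hx₀ : ∃ x₀ : E, A (fun _ => x₀) ≠ 0 := by
      by_contra h
      push_neg at h
      exact hA (polarization A hAsym h)
    obtain ⟨x₀, hx₀⟩ := hx₀
    refine polarization B hBsym fun y => ?_
    obtain ⟨P, hPeval, hPcoeff⟩ := diag_poly A x₀ y
    obtain ⟨Q, hQeval, _⟩ := diag_poly B x₀ y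
    have hPQ : P * Q = 0 := by
      apply Polynomial.funext
      intro t
      rw [Polynomial.eval_mul, hPeval, hQeval, hdiag]
      simp
    have hPne : P ≠ 0 := fun h => hx₀ (by rw [← hPcoeff, h]; simp)
    have hQ : Q = 0 := by
      rcases mul_eq_zero.1 hPQ with h | h
      · exact absurd h hPne
      · exact h
    have := hQeval 0
    rw [hQ] at this
    simpa using this.symm
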